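/- Let a < s be real numbers and let h : (a,s) → ℝ be twice differentiable with h > 0 on (a,s). Suppose h(y) → 0 as y → s⁻ and h(y)·h''(y) → k as y → s⁻ for some k ≠ 0. Then h' is unbounded near s, i.e., for every δ > 0 with s − δ > a, the function y ↦ (h'(y))² is not bounded on (s − δ, s). -/

import Mathlib

open Set Filter Topology

/-- Auxiliary: a function whose derivative is at least `c/(s-y)` near `s` cannot stay bounded. -/
lemma aux_unbounded_of_deriv_ge (s y₀ c B : ℝ) (hy : y₀ < s) (hc : 0 < c)
    (g : ℝ → ℝ) (hg : ∀ y ∈ Set.Ico y₀ s, DifferentiableAt ℝ g y)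
    (hder : ∀ y ∈ Set.Ioo y₀ s, c / (s - y) ≤ deriv g y)
    (hB : ∀ y ∈ Set.Ico y₀ s, |g y| ≤ B) : False := by
  set φ : ℝ → ℝ := fun y => g y + c * Real.log (s - y) with hφ
  have key : ∀ y ∈ Set.Ico y₀ s, HasDerivAt φ (deriv g y + c * ((s - y)⁻¹ * (-1))) y := by
    intro y hy'
    have hsy : (0:ℝ) < s - y := by simp [sub_pos]; exact hy'.2
    have h1 : HasDerivAt (fun y => s - y) (-1 : ℝ) y := by
      simpa using (hasDerivAt_id y).const_sub s
    have h2 : HasDerivAt (fun y => Real.log (s - y)) ((s - y)⁻¹ * (-1)) y :=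
      (Real.hasDerivAt_log hsy.ne').comp y h1
    exact ((hg y hy').hasDerivAt).add (h2.const_mul c)
  have hmono : MonotoneOn φ (Set.Ico y₀ s) := by
    apply monotoneOn_of_deriv_nonneg (convex_Ico y₀ s)
    · exact fun y hy' => ((key y hy').continuousAt).continuousWithinAt
    · intro y hy'
      rw [interior_Ico] at hy'
      exact ((key y (Set.Ioo_subset_Ico_self hy')).differentiableAt).differentiableWithinAt
    · intro y hy'
      rw [interior_Ico] at hy'
      have hsy : (0:ℝ) < s - y := by simp [sub_pos]; exact hy'.2
      rw [(key y (Set.Ioo_subset_Ico_self hy')).deriv]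
      have := hder y hy'
      rw [div_eq_mul_inv] at this
      nlinarith [mul_pos hc (inv_pos.mpr hsy)]
  -- choose the point near s
  set t : ℝ := min ((s - y₀)/2) ((s - y₀) * Real.exp (-(2*B+1)/c) / 2) with ht
  have hsy₀ : (0:ℝ) < s - y₀ := sub_pos.mpr hy
  have htpos : 0 < t := lt_min (by positivity) (by positivity)
  have htlt : t < s - y₀ := lt_of_le_of_lt (min_le_left _ _) (by linarith)
  set y₁ : ℝ := s - t with hy₁
  have hy₁mem : y₁ ∈ Set.Ico y₀ s := ⟨by simp [hy₁]; linarith, by simp [hy₁]; linarith⟩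
  have hy₀mem : y₀ ∈ Set.Ico y₀ s := ⟨le_rfl, hy⟩
  have hmono' := hmono hy₀mem hy₁mem (by simp [hy₁]; linarith)
  have hst : s - y₁ = t := by simp [hy₁]
  have hlogt : Real.log t ≤ Real.log (s - y₀) - (2*B+1)/c := by
    have h1 : t ≤ (s - y₀) * Real.exp (-(2*B+1)/c) := le_trans (min_le_right _ _) (by
      have : (0:ℝ) < (s - y₀) * Real.exp (-(2*B+1)/c) := by positivity
      linarith)
    calc Real.log t ≤ Real.log ((s - y₀) * Real.exp (-(2*B+1)/c)) :=
          Real.log_le_log htpos h1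
      _ = Real.log (s - y₀) + (-(2*B+1)/c) := by
          rw [Real.log_mul hsy₀.ne' (Real.exp_ne_zero _), Real.log_exp]
      _ = Real.log (s - y₀) - (2*B+1)/c := by ring
  have hBnn : 0 ≤ B := le_trans (abs_nonneg _) (hB y₀ hy₀mem)
  have h1 : g y₀ + c * Real.log (s - y₀) ≤ g y₁ + c * Real.log t := by
    simpa [hφ, hst] using hmono'
  have h2 : c * (Real.log (s - y₀) - Real.log t) ≥ 2*B+1 := by
    have := mul_le_mul_of_nonneg_left (by linarith : (2*B+1)/c ≤ Real.log (s - y₀) - Real.log t) hc.le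
    rw [mul_div_cancel₀ _ hc.ne'] at this
    linarith
  have hg0 := abs_le.mp (hB y₀ hy₀mem)
  have hg1 := abs_le.mp (hB y₁ hy₁mem)
  nlinarith

theorem slope_unbounded_of_hhpp_limit_ne_zero
    (a s : ℝ) (has : a < s) (h : ℝ → ℝ)
    (hpos : ∀ y ∈ Set.Ioo a s, 0 < h y)
    (hdiff : ∀ y ∈ Set.Ioo a s, DifferentiableAt ℝ h y ∧ DifferentiableAt ℝ (deriv h) y)
    (hlim0 : Filter.Tendsto h (nhdsWithin s (Set.Ioo a s)) (nhds 0))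
    (k : ℝ) (hk : k ≠ 0)
    (hlimk : Filter.Tendsto (fun y => h y * deriv (deriv h) y)
      (nhdsWithin s (Set.Ioo a s)) (nhds k)) :
    ∀ δ > 0, a < s - δ →
      ¬ ∃ M : ℝ, ∀ y ∈ Set.Ioo (s - δ) s, (deriv h y) ^ 2 ≤ M := by
  intro δ hδ haδ
  rintro ⟨M, hM⟩
  rw [nhdsWithin_Ioo_eq_nhdsLT has] at hlim0 hlimk
  have hsub : Set.Ioo (s - δ) s ⊆ Set.Ioo a s := fun y hy => ⟨lt_trans haδ hy.1, hy.2⟩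
  -- bound on |h'|
  have hMnn : 0 ≤ M := le_trans (sq_nonneg _) (hM (s - δ/2) ⟨by linarith, by linarith⟩)
  set B : ℝ := Real.sqrt M with hB
  have habs : ∀ y ∈ Set.Ioo (s - δ) s, |deriv h y| ≤ B := by
    intro y hy
    rw [← Real.sqrt_sq_eq_abs]
    exact Real.sqrt_le_sqrt (hM y hy)
  set C : ℝ := B + 1 with hC
  have hCpos : 0 < C := by positivity
  -- h y ≤ C * (s - y)
  have hψd : ∀ y ∈ Set.Ioo a s, HasDerivAt (fun y => h y + C * y) (deriv h y + C) y := by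
    intro y hy
    have h1 : HasDerivAt (fun y : ℝ => C * y) C y := by
      simpa using (hasDerivAt_id y).const_mul C
    exact ((hdiff y hy).1.hasDerivAt).add h1
  have hψmono : MonotoneOn (fun y => h y + C * y) (Set.Ico (s - δ) s) := by
    apply monotoneOn_of_deriv_nonneg (convex_Ico _ _)
    · intro y hy
      have : y ∈ Set.Ioo a s := ⟨lt_of_lt_of_le haδ hy.1, hy.2⟩
      exact ((hψd y this).continuousAt).continuousWithinAt
    · intro y hy
      rw [interior_Ico] at hy
      exact ((hψd y (hsub hy)).differentiableAt).differentiableWithinAt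
    · intro y hy
      rw [interior_Ico] at hy
      rw [(hψd y (hsub hy)).deriv]
      have := abs_le.mp (habs y hy)
      simp [hC] at this ⊢
      linarith [this.1]
  have hhle : ∀ y ∈ Set.Ioo (s - δ) s, h y ≤ C * (s - y) := by
    intro y hy
    have hne : (𝓝[<] s).NeBot := inferInstance
    have hev : ∀ᶠ z in 𝓝[<] s, h y ≤ h z + C * (z - y) := by
      filter_upwards [self_mem_nhdsWithin,
        eventually_nhdsWithin_of_eventually_nhds (eventually_gt_nhds hy.2)] with z hz1 hz2
      have hzmem : z ∈ Set.Ico (s - δ) s := ⟨le_of_lt (lt_trans hy.1 hz2), hz1⟩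
      have := hψmono (⟨hy.1.le, hy.2⟩ : y ∈ Set.Ico (s - δ) s) hzmem hz2.le
      simp only at this
      linarith
    have hlim : Tendsto (fun z => h z + C * (z - y)) (𝓝[<] s) (𝓝 (0 + C * (s - y))) := by
      apply hlim0.add
      exact (((continuous_const.mul (continuous_id.sub continuous_const)).tendsto s)).mono_left
        nhdsWithin_le_nhds
    have := ge_of_tendsto hlim hev
    linarith
  -- case split on the sign of k
  rcases hk.lt_or_gt with hkneg | hkpos
  · -- k < 0 : apply helper to -h'
    have hev : ∀ᶠ y in 𝓝[<] s, h y * deriv (deriv h) y < k / 2 :=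
      hlimk.eventually (eventually_lt_nhds (by linarith))
    obtain ⟨l, hl, hls⟩ := mem_nhdsLT_iff_exists_Ioo_subset.mp hev
    set y₀ : ℝ := max l (s - δ/2) with hy₀
    have hy₀lt : y₀ < s := max_lt hl (by linarith)
    have hy₀gt : s - δ < y₀ := lt_of_lt_of_le (by linarith) (le_max_right _ _)
    have hIsub : Set.Ico y₀ s ⊆ Set.Ioo (s - δ) s := fun y hy =>
      ⟨lt_of_lt_of_le hy₀gt hy.1, hy.2⟩
    refine aux_unbounded_of_deriv_ge s y₀ (-k / (2 * C)) B hy₀lt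
      (div_pos (by linarith) (by linarith)) (fun y => -(deriv h y)) ?_ ?_ ?_
    · intro y hy
      exact ((hdiff y (hsub (hIsub hy))).2).neg
    · intro y hy
      have hymem : y ∈ Set.Ioo (s - δ) s := hIsub (Set.Ioo_subset_Ico_self hy)
      have hyas : y ∈ Set.Ioo a s := hsub hymem
      have hhy : 0 < h y := hpos y hyas
      have hsy : (0:ℝ) < s - y := sub_pos.mpr hy.2
      have hkk : h y * deriv (deriv h) y < k / 2 :=
        hls ⟨lt_of_le_of_lt (le_max_left _ _) hy.1, hy.2⟩
      have hle : h y ≤ C * (s - y) := hhle y hymem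
      rw [deriv.fun_neg]
      set d := deriv (deriv h) y with hd
      have h3 : d < 0 := by nlinarith
      rw [div_le_iff₀ hsy, div_le_iff₀ (by linarith : (0:ℝ) < 2*C)]
      nlinarith [mul_le_mul_of_nonpos_right hle h3.le]
    · intro y hy
      rw [abs_neg]
      exact habs y (hIsub hy)
  · -- k > 0 : apply helper to h'
    have hev : ∀ᶠ y in 𝓝[<] s, k / 2 < h y * deriv (deriv h) y :=
      hlimk.eventually (eventually_gt_nhds (by linarith))
    obtain ⟨l, hl, hls⟩ := mem_nhdsLT_iff_exists_Ioo_subset.mp hev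
    set y₀ : ℝ := max l (s - δ/2) with hy₀
    have hy₀lt : y₀ < s := max_lt hl (by linarith)
    have hy₀gt : s - δ < y₀ := lt_of_lt_of_le (by linarith) (le_max_right _ _)
    have hIsub : Set.Ico y₀ s ⊆ Set.Ioo (s - δ) s := fun y hy =>
      ⟨lt_of_lt_of_le hy₀gt hy.1, hy.2⟩
    refine aux_unbounded_of_deriv_ge s y₀ (k / (2 * C)) B hy₀lt (by positivity)
      (deriv h) ?_ ?_ ?_
    · intro y hy
      exact (hdiff y (hsub (hIsub hy))).2
    · intro y hy
      have hymem : y ∈ Set.Ioo (s - δ) s := hIsub (Set.Ioo_subset_Ico_self hy)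
      have hyas : y ∈ Set.Ioo a s := hsub hymem
      have hhy : 0 < h y := hpos y hyas
      have hsy : (0:ℝ) < s - y := sub_pos.mpr hy.2
      have hkk : k / 2 < h y * deriv (deriv h) y :=
        hls ⟨lt_of_le_of_lt (le_max_left _ _) hy.1, hy.2⟩
      have hle : h y ≤ C * (s - y) := hhle y hymem
      set d := deriv (deriv h) y with hd
      have h3 : 0 < d := by nlinarith
      rw [div_le_iff₀ hsy, div_le_iff₀ (by linarith : (0:ℝ) < 2*C)]
      nlinarith [mul_le_mul_of_nonneg_right hle h3.le]
    · intro y hy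
      exact habs y (hIsub hy)
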